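/- Let H be a finite-dimensional pointed Hopf algebra with group of grouplikes G, and let π: H → K be a surjective Hopf algebra map to a Hopf algebra K. If π is injective on the first term F₁H of the coradical filtration of H, then π is injective (hence an isomorphism). -/

import Mathlib

open scoped TensorProduct

section Conv
variable (R A : Type*) [CommRing R] [AddCommGroup A] [Module R A] [Coalgebra R A]
noncomputable def hrConv :
    Module.Dual R A →ₗ[R] Module.Dual R A →ₗ[R] Module.Dual R A :=
  LinearMap.mk₂ R
    (fun f g => LinearMap.mul' R R ∘ₗ TensorProduct.map f g ∘ₗ Coalgebra.comul)
    (fun f f' g => by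
                      rw [TensorProduct.map_add_left, LinearMap.add_comp, LinearMap.comp_add])
    (fun c f g => by
                     rw [TensorProduct.map_smul_left, LinearMap.smul_comp, LinearMap.comp_smul])
    (fun f g g' => by
                      rw [TensorProduct.map_add_right, LinearMap.add_comp, LinearMap.comp_add])
    (fun c f g => by
                     rw [TensorProduct.map_smul_right, LinearMap.smul_comp, LinearMap.comp_smul])
variable {R A}
theorem hrConv_def (f g : Module.Dual R A) :
    hrConv R A f g = LinearMap.mul' R R ∘ₗ TensorProduct.map f g ∘ₗ Coalgebra.comul := rfl
theorem hrConv_apply (f g : Module.Dual R A) (x : A) :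
    hrConv R A f g x = LinearMap.mul' R R (TensorProduct.map f g (Coalgebra.comul x)) := rfl
theorem hrConv_assoc (f g h : Module.Dual R A) :
    hrConv R A (hrConv R A f g) h = hrConv R A f (hrConv R A g h) := by
  have key : (LinearMap.mul' R R ∘ₗ
        TensorProduct.map (LinearMap.mul' R R ∘ₗ TensorProduct.map f g) h :
          (A ⊗[R] A) ⊗[R] A →ₗ[R] R)
      = (LinearMap.mul' R R ∘ₗ
          TensorProduct.map f (LinearMap.mul' R R ∘ₗ TensorProduct.map g h)) ∘ₗ
        (TensorProduct.assoc R A A A).toLinearMap := by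
    apply TensorProduct.ext_threefold
    intro x y z
    simp [mul_assoc]
  have e1 : TensorProduct.map (hrConv R A f g) h
      = (TensorProduct.map (LinearMap.mul' R R ∘ₗ TensorProduct.map f g) h)
          ∘ₗ LinearMap.rTensor A (Coalgebra.comul (R := R) (A := A)) := by
    rw [LinearMap.rTensor, ← TensorProduct.map_comp, LinearMap.comp_id, hrConv_def,
      LinearMap.comp_assoc]
  have e2 : TensorProduct.map f (hrConv R A g h)
      = (TensorProduct.map f (LinearMap.mul' R R ∘ₗ TensorProduct.map g h))
          ∘ₗ LinearMap.lTensor A (Coalgebra.comul (R := R) (A := A)) := by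
    rw [LinearMap.lTensor, ← TensorProduct.map_comp, LinearMap.comp_id, hrConv_def,
      LinearMap.comp_assoc]
  ext x
  rw [hrConv_apply, hrConv_apply, LinearMap.congr_fun e1 (Coalgebra.comul x),
    LinearMap.congr_fun e2 (Coalgebra.comul x)]
  simp only [LinearMap.comp_apply]
  rw [← Coalgebra.coassoc_apply]
  simpa using LinearMap.congr_fun key
    (LinearMap.rTensor A (Coalgebra.comul (R := R)) (Coalgebra.comul x))
end Conv

/-- Heyneman–Radford criterion for pointed Hopf algebras: let `H` be a finite-dimensional
pointed Hopf algebra over `ℂ` with coradical filtration `F`, so that `F 0` is the span of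
the grouplike elements (pointedness), each `F (n+1)` is the wedge
`Δ⁻¹(F 0 ⊗ H + H ⊗ F n)`, and the filtration is exhaustive.  If a surjective Hopf algebra
map `π : H → K` is injective on `F 1`, then `π` is injective (hence an isomorphism). -/
theorem stmt15 (H K : Type*) [Ring H] [HopfAlgebra ℂ H] [FiniteDimensional ℂ H]
    [Ring K] [HopfAlgebra ℂ K]
    (F : ℕ → Submodule ℂ H)
    (hF0 : F 0 = Submodule.span ℂ
      {a : H | Coalgebra.comul (R := ℂ) a = a ⊗ₜ[ℂ] a ∧ Coalgebra.counit (R := ℂ) a = 1})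
    (hFsucc : ∀ n : ℕ, F (n + 1)
      = Submodule.comap (Coalgebra.comul (R := ℂ) (A := H))
          (LinearMap.range (TensorProduct.map (F 0).subtype (⊤ : Submodule ℂ H).subtype)
            ⊔ LinearMap.range (TensorProduct.map (⊤ : Submodule ℂ H).subtype (F n).subtype)))
    (hexh : ⨆ n, F n = ⊤)
    (π : H →ₐc[ℂ] K) (hsurj : Function.Surjective π)
    (hinj1 : ∀ x ∈ F 1, π x = 0 → x = 0) :
    Function.Injective π := by
  classical
  set πl : H →ₗ[ℂ] K := π.toCoalgHom.toLinearMap with hπl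
  have hπlcoe : ∀ x : H, πl x = π x := fun x => rfl
  -- the dual spaces
  set W : Submodule ℂ (Module.Dual ℂ H) := (F 0).dualAnnihilator with hW
  set B : Submodule ℂ (Module.Dual ℂ H) := LinearMap.range πl.dualMap with hB
  set pw : ℕ → Submodule ℂ (Module.Dual ℂ H) :=
    fun n => Nat.rec W (fun _ ih => Submodule.map₂ (hrConv ℂ H) W ih) n with hpw
  have pw_zero : pw 0 = W := rfl
  have pw_succ : ∀ n, pw (n + 1) = Submodule.map₂ (hrConv ℂ H) W (pw n) := fun n => rfl
  -- grouplikes are in F 0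
  have hGrp : ∀ a : H, Coalgebra.comul (R := ℂ) a = a ⊗ₜ[ℂ] a →
      Coalgebra.counit (R := ℂ) a = 1 → a ∈ F 0 := by
    intro a h1 h2
    rw [hF0]
    exact Submodule.subset_span ⟨h1, h2⟩
  -- W is closed under convolution
  have hWmem : ∀ f ∈ W, ∀ x ∈ F 0, f x = 0 := by
    intro f hf x hx
    rw [hW] at hf
    exact (Submodule.mem_dualAnnihilator f).mp hf x hx
  have hWclosed : ∀ f ∈ W, ∀ g ∈ W, hrConv ℂ H f g ∈ W := by
    intro f hf g hg
    rw [hW, Submodule.mem_dualAnnihilator]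
    intro x hx
    rw [hF0] at hx
    induction hx using Submodule.span_induction with
    | mem a ha =>
        rw [hrConv_apply, ha.1]
        simp only [TensorProduct.map_tmul, LinearMap.mul'_apply]
        rw [hWmem f hf a (hGrp a ha.1 ha.2), zero_mul]
    | zero => simp
    | add x y _ _ hx hy => rw [map_add, hx, hy, add_zero]
    | smul c x _ hx => rw [map_smul, hx, smul_zero]
  -- powers of W are contained in W
  have hpw_le_W : ∀ n, pw n ≤ W := by
    intro n
    induction n with
    | zero => exact le_rfl
    | succ n ih =>
        exact Submodule.map₂_le.mpr fun f hf g hg => hWclosed f hf g (ih hg)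
  -- B is closed under convolution
  have hBclosed : ∀ f ∈ B, ∀ g ∈ B, hrConv ℂ H f g ∈ B := by
    intro f hf g hg
    rw [hB, LinearMap.mem_range] at hf hg
    obtain ⟨φ, rfl⟩ := hf
    obtain ⟨ψ, rfl⟩ := hg
    rw [hB, LinearMap.mem_range]
    refine ⟨hrConv ℂ K φ ψ, ?_⟩
    ext x
    have hcc := LinearMap.congr_fun (π.toCoalgHom.map_comp_comul) x
    simp only [LinearMap.comp_apply] at hcc
    show hrConv ℂ K φ ψ (πl x) = hrConv ℂ H (πl.dualMap φ) (πl.dualMap ψ) x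
    have h1 : πl.dualMap φ = φ ∘ₗ πl := rfl
    have h2 : πl.dualMap ψ = ψ ∘ₗ πl := rfl
    rw [hrConv_apply, hrConv_apply, h1, h2, TensorProduct.map_comp]
    rw [LinearMap.comp_apply, ← hcc]
  -- F is monotone
  have hmono : ∀ n, F n ≤ F (n + 1) := by
    intro n
    induction n with
    | zero =>
        rw [hF0, Submodule.span_le]
        rintro a ⟨h1, h2⟩
        have haF0 : a ∈ F 0 := hGrp a h1 h2
        rw [SetLike.mem_coe, hFsucc 0]
        refine Submodule.mem_comap.mpr (Submodule.mem_sup_left ?_)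
        refine LinearMap.mem_range.mpr
          ⟨(⟨a, haF0⟩ : F 0) ⊗ₜ[ℂ] (⟨a, trivial⟩ : (⊤ : Submodule ℂ H)), ?_⟩
        rw [TensorProduct.map_tmul, h1]
        rfl
    | succ n ih =>
        rw [hFsucc n, hFsucc (n + 1)]
        apply Submodule.comap_mono
        apply sup_le_sup_left
        have hfac : TensorProduct.map (⊤ : Submodule ℂ H).subtype (F n).subtype
            = TensorProduct.map (⊤ : Submodule ℂ H).subtype (F (n + 1)).subtype
                ∘ₗ TensorProduct.map LinearMap.id (Submodule.inclusion ih) := by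
          rw [← TensorProduct.map_comp, LinearMap.comp_id,
            Submodule.subtype_comp_inclusion]
        rw [hfac]
        exact LinearMap.range_comp_le_range _ _
  have hmono' : Monotone F := monotone_nat_of_le_succ hmono
  -- some F N is everything
  have hN : ∃ N, F N = ⊤ := by
    obtain ⟨n₀, hn₀⟩ := monotone_stabilizes_iff_noetherian.mpr inferInstance ⟨F, hmono'⟩
    refine ⟨n₀, ?_⟩
    rw [← top_le_iff, ← hexh]
    refine iSup_le fun m => ?_
    rcases le_total m n₀ with h | h
    · exact hmono' h
    · exact le_of_eq (hn₀ m h).symm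
  -- powers of W annihilate the filtration
  have hannW : ∀ n, pw n ≤ (F n).dualAnnihilator := by
    intro n
    induction n with
    | zero => exact le_rfl
    | succ n ih =>
        refine Submodule.map₂_le.mpr fun f hf g hg => ?_
        rw [Submodule.mem_dualAnnihilator]
        intro x hx
        rw [hFsucc n] at hx
        have hx' := Submodule.mem_comap.mp hx
        have hker : LinearMap.range (TensorProduct.map (F 0).subtype (⊤ : Submodule ℂ H).subtype)
            ⊔ LinearMap.range (TensorProduct.map (⊤ : Submodule ℂ H).subtype (F n).subtype)
            ≤ LinearMap.ker (LinearMap.mul' ℂ ℂ ∘ₗ TensorProduct.map f g) := by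
          refine sup_le ?_ ?_
          · rw [LinearMap.range_le_ker_iff, LinearMap.comp_assoc, ← TensorProduct.map_comp]
            have hz : f ∘ₗ (F 0).subtype = 0 := by
              ext y
              exact hWmem f hf y.1 y.2
            rw [hz, TensorProduct.map_zero_left, LinearMap.comp_zero]
          · rw [LinearMap.range_le_ker_iff, LinearMap.comp_assoc, ← TensorProduct.map_comp]
            have hz : g ∘ₗ (F n).subtype = 0 := by
              ext y
              exact (Submodule.mem_dualAnnihilator g).mp (ih hg) y.1 y.2
            rw [hz, TensorProduct.map_zero_right, LinearMap.comp_zero]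
        have hmem := hker hx'
        rw [LinearMap.mem_ker] at hmem
        rw [hrConv_apply]
        simpa using hmem
  -- dual of injectivity on F 1
  have htop : B ⊔ (F 1).dualAnnihilator = ⊤ := by
    have hker1 : LinearMap.ker πl ⊓ F 1 = ⊥ := by
      rw [eq_bot_iff]
      rintro x ⟨hx1, hx2⟩
      have hx0 : π x = 0 := by rw [← hπlcoe]; exact hx1
      have := hinj1 x hx2 hx0
      simp [this]
    rw [hB, LinearMap.range_dualMap_eq_dualAnnihilator_ker,
      ← Subspace.dualAnnihilator_inf_eq, hker1, Submodule.dualAnnihilator_bot]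
  -- the hard lemma
  have hV1 : (F 1).dualAnnihilator ≤ pw 1 := by
    -- choose a complement of F 0 and the projection along F 0
    obtain ⟨C, hC⟩ := Submodule.exists_isCompl (F 0)
    set pr : H →ₗ[ℂ] H := C.subtype ∘ₗ Submodule.projectionOnto C (F 0) hC.symm with hpr
    have hprF0 : ∀ x ∈ F 0, pr x = 0 := by
      intro x hx
      rw [hpr]
      simp [Submodule.projectionOnto_apply_of_mem_right hC.symm hx]
    have hprC : ∀ x ∈ C, pr x = x := by
      intro x hx
      rw [hpr]
      simp only [LinearMap.comp_apply]
      rw [show x = ((⟨x, hx⟩ : C) : H) from rfl, Submodule.projectionOnto_apply_left hC.symm]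
      rfl
    have hsub : ∀ x : H, x - pr x ∈ F 0 := by
      intro x
      have hx : x ∈ F 0 ⊔ C := by rw [hC.sup_eq_top]; trivial
      obtain ⟨a, ha, c, hc, rfl⟩ := Submodule.mem_sup.mp hx
      rw [map_add, hprF0 a ha, hprC c hc, zero_add, add_sub_cancel_right]
      exact ha
    set T : H →ₗ[ℂ] H ⊗[ℂ] H := TensorProduct.map pr pr ∘ₗ Coalgebra.comul with hT
    -- the kernel of T is contained in F 1
    have hkerT : ∀ x : H, T x = 0 → x ∈ F 1 := by
      intro x hx
      rw [hFsucc 0]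
      refine Submodule.mem_comap.mpr ?_
      set e : H →ₗ[ℂ] H := LinearMap.id - pr with he
      have hdecomp : Coalgebra.comul (R := ℂ) x
          = TensorProduct.map e LinearMap.id (Coalgebra.comul x)
            + TensorProduct.map pr e (Coalgebra.comul x) := by
        have hid : (TensorProduct.map e LinearMap.id : H ⊗[ℂ] H →ₗ[ℂ] H ⊗[ℂ] H)
            + (TensorProduct.map pr e + TensorProduct.map pr pr) = LinearMap.id := by
          rw [← TensorProduct.map_add_right, he, sub_add_cancel, ← TensorProduct.map_add_left]
          rw [sub_add_cancel]
          exact TensorProduct.map_id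
        have hcongr := LinearMap.congr_fun hid (Coalgebra.comul (R := ℂ) x)
        simp only [LinearMap.add_apply, LinearMap.id_apply] at hcongr
        rw [hT] at hx
        simp only [LinearMap.comp_apply] at hx
        rw [hx, add_zero] at hcongr
        exact hcongr.symm
      rw [hdecomp]
      have hecod : ∀ y : H, e y ∈ F 0 := by
        intro y
        rw [he]
        simpa using hsub y
      refine Submodule.add_mem _ (Submodule.mem_sup_left ?_) (Submodule.mem_sup_right ?_)
      · have hfac : (TensorProduct.map e LinearMap.id : H ⊗[ℂ] H →ₗ[ℂ] H ⊗[ℂ] H)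
            = TensorProduct.map (F 0).subtype (⊤ : Submodule ℂ H).subtype
                ∘ₗ TensorProduct.map (e.codRestrict (F 0) hecod)
                    (LinearMap.id.codRestrict (⊤ : Submodule ℂ H) fun y => Submodule.mem_top) := by
          rw [← TensorProduct.map_comp, LinearMap.subtype_comp_codRestrict,
            LinearMap.subtype_comp_codRestrict]
        rw [hfac]
        exact LinearMap.mem_range.mpr ⟨_, rfl⟩
      · have hfac : (TensorProduct.map pr e : H ⊗[ℂ] H →ₗ[ℂ] H ⊗[ℂ] H)
            = TensorProduct.map (⊤ : Submodule ℂ H).subtype (F 0).subtype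
                ∘ₗ TensorProduct.map (pr.codRestrict (⊤ : Submodule ℂ H) fun y => Submodule.mem_top)
                    (e.codRestrict (F 0) hecod) := by
          rw [← TensorProduct.map_comp, LinearMap.subtype_comp_codRestrict,
            LinearMap.subtype_comp_codRestrict]
        rw [hfac]
        exact LinearMap.mem_range.mpr ⟨_, rfl⟩
    -- now factor any annihilator of F 1 through T
    intro f hf
    have hfF1 : ∀ x ∈ F 1, f x = 0 := (Submodule.mem_dualAnnihilator f).mp hf
    have hkerle : LinearMap.ker T ≤ LinearMap.ker f := by
      intro x hx
      rw [LinearMap.mem_ker]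
      exact hfF1 x (hkerT x (LinearMap.mem_ker.mp hx))
    obtain ⟨D, hD⟩ := Submodule.exists_isCompl (LinearMap.range T)
    set φ : Module.Dual ℂ (H ⊗[ℂ] H) :=
      (((LinearMap.ker T).liftQ f hkerle) ∘ₗ
          (T.quotKerEquivRange.symm : LinearMap.range T →ₗ[ℂ] H ⧸ LinearMap.ker T))
        ∘ₗ Submodule.projectionOnto (LinearMap.range T) D hD with hφ
    have hφT : ∀ x : H, φ (T x) = f x := by
      intro x
      rw [hφ]
      simp only [LinearMap.comp_apply]
      have h1 : Submodule.projectionOnto (LinearMap.range T) D hD (T x)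
          = ⟨T x, LinearMap.mem_range_self T x⟩ :=
        Submodule.projectionOnto_apply_left hD ⟨T x, LinearMap.mem_range_self T x⟩
      rw [h1]
      have h2 : T.quotKerEquivRange.symm ⟨T x, LinearMap.mem_range_self T x⟩
          = (LinearMap.ker T).mkQ x :=
        T.quotKerEquivRange_symm_apply_image x (LinearMap.mem_range_self T x)
      simp only [LinearEquiv.coe_coe]
      rw [h2]
      exact Submodule.liftQ_apply _ f x
    have hfeq : f = φ ∘ₗ T := by
      ext x
      exact (hφT x).symm
    -- express φ through the dual tensor product
    have hdd : ∀ g g' : Module.Dual ℂ H,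
        TensorProduct.dualDistrib ℂ H H (g ⊗ₜ[ℂ] g')
          = LinearMap.mul' ℂ ℂ ∘ₗ TensorProduct.map g g' := by
      intro g g'
      apply TensorProduct.ext'
      intro a b
      simp [TensorProduct.dualDistrib_apply]
    have hmem : ∀ u : Module.Dual ℂ H ⊗[ℂ] Module.Dual ℂ H,
        (TensorProduct.dualDistrib ℂ H H u) ∘ₗ T ∈ Submodule.map₂ (hrConv ℂ H) W W := by
      intro u
      induction u using TensorProduct.induction_on with
      | zero =>
          rw [map_zero, LinearMap.zero_comp]
          exact Submodule.zero_mem _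
      | tmul g g' =>
          have hgW : ∀ g : Module.Dual ℂ H, g ∘ₗ pr ∈ W := by
            intro g
            rw [hW, Submodule.mem_dualAnnihilator]
            intro w hw
            simp [LinearMap.comp_apply, hprF0 w hw]
          have heq : (TensorProduct.dualDistrib ℂ H H (g ⊗ₜ[ℂ] g')) ∘ₗ T
              = hrConv ℂ H (g ∘ₗ pr) (g' ∘ₗ pr) := by
            rw [hdd, hrConv_def, hT, TensorProduct.map_comp g g' pr pr]
            simp only [LinearMap.comp_assoc]
          rw [heq]
          exact Submodule.apply_mem_map₂ _ (hgW g) (hgW g')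
      | add u v hu hv =>
          rw [map_add, LinearMap.add_comp]
          exact Submodule.add_mem _ hu hv
    obtain ⟨u, hu⟩ : ∃ u, TensorProduct.dualDistrib ℂ H H u = φ := by
      refine ⟨(TensorProduct.dualDistribEquiv ℂ H H).symm φ, ?_⟩
      exact (TensorProduct.dualDistribEquiv ℂ H H).apply_symm_apply φ
    have := hmem u
    rw [hu, ← hfeq] at this
    exact this
  -- convolution of powers
  have hconvpow : ∀ i j, ∀ a ∈ pw i, ∀ b ∈ pw j, hrConv ℂ H a b ∈ pw (i + j + 1) := by
    intro i
    induction i with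
    | zero =>
        intro j a ha b hb
        have h1 : hrConv ℂ H a b ∈ pw (j + 1) :=
          Submodule.apply_mem_map₂ _ ha hb
        have he : 0 + j + 1 = j + 1 := by omega
        rw [he]
        exact h1
    | succ i ih =>
        intro j a ha b hb
        have hle : Submodule.map₂ (hrConv ℂ H) W (pw i) ≤
            Submodule.comap ((hrConv ℂ H).flip b) (pw (i + 1 + j + 1)) := by
          refine Submodule.map₂_le.mpr fun w hw a' ha' => ?_
          refine Submodule.mem_comap.mpr ?_
          show hrConv ℂ H (hrConv ℂ H w a') b ∈ _
          rw [hrConv_assoc]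
          have h1 : hrConv ℂ H a' b ∈ pw (i + j + 1) := ih j a' ha' b hb
          have h2 : hrConv ℂ H w (hrConv ℂ H a' b) ∈ pw (i + j + 1 + 1) :=
            Submodule.apply_mem_map₂ _ hw h1
          have he : i + 1 + j + 1 = i + j + 1 + 1 := by omega
          rw [he]
          exact h2
        exact Submodule.mem_comap.mp (hle ha)
  -- main induction
  have hB1 : B ⊔ pw 1 = ⊤ := by
    refine eq_top_iff.mpr ?_
    rw [← htop]
    exact sup_le_sup_left hV1 B
  have hBk : ∀ k, B ⊔ pw (k + 1) = ⊤ := by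
    intro k
    induction k with
    | zero => exact hB1
    | succ k ihk =>
        refine eq_top_iff.mpr ?_
        rw [← ihk]
        refine sup_le le_sup_left ?_
        refine Submodule.map₂_le.mpr fun w hw v hv => ?_
        obtain ⟨b, hb, u, hu, hbu⟩ := Submodule.mem_sup.mp
          (show w ∈ B ⊔ pw 1 by rw [hB1]; trivial)
        obtain ⟨b', hb', u', hu', hbu'⟩ := Submodule.mem_sup.mp
          (show v ∈ B ⊔ pw (k + 1) by rw [ihk]; trivial)
        have hbW : b ∈ W := by
          rw [eq_sub_of_add_eq hbu]
          exact Submodule.sub_mem W hw (hpw_le_W 1 hu)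
        have hdecomp : hrConv ℂ H w v
            = hrConv ℂ H b b' + hrConv ℂ H b u' + hrConv ℂ H u v := by
          rw [← hbu, map_add, LinearMap.add_apply]
          congr 1
          rw [← hbu', map_add]
        rw [hdecomp]
        have m1 : hrConv ℂ H b b' ∈ B := hBclosed b hb b' hb'
        have m2 : hrConv ℂ H b u' ∈ pw (k + 1 + 1) :=
          Submodule.apply_mem_map₂ _ hbW hu'
        have m3 : hrConv ℂ H u v ∈ pw (k + 1 + 1) := by
          have := hconvpow 1 k u hu v hv
          have he : 1 + k + 1 = k + 1 + 1 := by omega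
          rw [he] at this
          exact this
        exact Submodule.add_mem _
          (Submodule.add_mem _ (Submodule.mem_sup_left m1) (Submodule.mem_sup_right m2))
          (Submodule.mem_sup_right m3)
  -- conclusion
  obtain ⟨N, hNtop⟩ := hN
  have hFN1 : F (N + 1) = ⊤ := eq_top_iff.mpr (hNtop ▸ hmono N)
  have hpwN : pw (N + 1) ≤ ⊥ := by
    have h := hannW (N + 1)
    rwa [hFN1, Submodule.dualAnnihilator_top] at h
  have hBtop : B = ⊤ := by
    have h := hBk N
    rwa [le_bot_iff.mp hpwN, sup_bot_eq] at h
  have hker : ∀ z : H, πl z = 0 → z = 0 := by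
    intro z hz
    rw [← Module.forall_dual_apply_eq_zero_iff ℂ z]
    intro φ
    have hφB : φ ∈ B := hBtop ▸ Submodule.mem_top
    rw [hB, LinearMap.mem_range] at hφB
    obtain ⟨ψ, rfl⟩ := hφB
    rw [LinearMap.dualMap_apply, hz, map_zero]
  intro x y hxy
  have hz : πl (x - y) = 0 := by
    rw [map_sub, hπlcoe, hπlcoe, hxy, sub_self]
  exact sub_eq_zero.mp (hker _ hz)
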